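/- Let L_1, ..., L_n be positive reals and define Q̃(x) = ∑ M(k_1,...,k_n) over all tuples (k_1,...,k_n) of nonnegative integers with L_1 k_1 + ... + L_n k_n ≤ x, for x ≥ 0, and Q̃(x) = 0 for x < 0. Then for all real x, Q̃(x) = Q̃(x - L_1) + ... + Q̃(x - L_n) + H(x), where H is the Heaviside step function (H(x) = 1 for x ≥ 0, H(x) = 0 for x < 0). -/

import Mathlib

open Finset Nat

/-- Cumulative multinomial counting function: `Qt L x` is the sum of multinomial
coefficients `M(k)` over all tuples `k` of nonnegative integers with `∑ L i * k i ≤ x`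
(and `Qt L x = 0` for `x < 0`, since then no tuple satisfies the constraint). -/
noncomputable def Qt {n : ℕ} (L : Fin n → ℝ) (x : ℝ) : ℝ :=
  ∑' k : Fin n → ℕ, if ∑ i, L i * k i ≤ x then (Nat.multinomial Finset.univ k : ℝ) else 0

/-- Pascal-type recursion for multinomial coefficients. -/
lemma pascal_multinomial {n : ℕ} (k : Fin n → ℕ) (hk : k ≠ 0) :
    Nat.multinomial Finset.univ k =
      ∑ i, if 0 < k i then
        Nat.multinomial Finset.univ (Function.update k i (k i - 1)) else 0 := by
  classical
  set N := ∑ i, k i with hN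
  have hNpos : 0 < N := by
    obtain ⟨i, hi⟩ := Function.ne_iff.mp hk
    exact lt_of_lt_of_le (Nat.pos_of_ne_zero hi)
      (Finset.single_le_sum (fun _ _ => Nat.zero_le _) (mem_univ i))
  have hP : 0 < ∏ i, (k i) ! := Finset.prod_pos fun i _ => (k i).factorial_pos
  apply Nat.eq_of_mul_eq_mul_left hP
  rw [Finset.mul_sum]
  have key : ∀ i, (∏ j, (k j) !) *
      (if 0 < k i then Nat.multinomial Finset.univ (Function.update k i (k i - 1)) else 0)
      = (if 0 < k i then k i * (N - 1) ! else 0) := by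
    intro i
    by_cases hki : 0 < k i
    · rw [if_pos hki, if_pos hki]
      have hspec := Nat.multinomial_spec Finset.univ (Function.update k i (k i - 1))
      have hsum : ∑ j, Function.update k i (k i - 1) j = N - 1 := by
        rw [Finset.sum_update_of_mem (mem_univ i)]
        have hsplit : N = k i + ∑ j ∈ univ.erase i, k j :=
          (Finset.add_sum_erase _ _ (mem_univ i)).symm
        rw [← Finset.erase_eq]
        omega
      have hprod : k i * ∏ j, (Function.update k i (k i - 1) j) ! = ∏ j, (k j) ! := by
        have : (fun j => (Function.update k i (k i - 1) j) !)
            = Function.update (fun j => (k j) !) i ((k i - 1) !) :=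
          funext fun j => Function.apply_update (fun _ v => v !) k i (k i - 1) j
        rw [this, Finset.prod_update_of_mem (mem_univ i), ← Finset.erase_eq, ← mul_assoc,
          Nat.mul_factorial_pred hki.ne']
        exact Finset.mul_prod_erase univ (fun j => (k j) !) (mem_univ i)
      calc (∏ j, (k j) !) * Nat.multinomial Finset.univ (Function.update k i (k i - 1))
          = k i * ((∏ j, (Function.update k i (k i - 1) j) !) *
            Nat.multinomial Finset.univ (Function.update k i (k i - 1))) := by
            rw [← mul_assoc, hprod]
        _ = k i * (N - 1) ! := by rw [hspec, hsum]
    · have h0 : k i = 0 := by omega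
      simp [hki]
  rw [Finset.sum_congr rfl (fun i _ => key i)]
  have : ∑ i, (if 0 < k i then k i * (N - 1) ! else 0) = ∑ i, k i * (N - 1) ! := by
    apply Finset.sum_congr rfl
    intro i _
    by_cases hki : 0 < k i
    · rw [if_pos hki]
    · have : k i = 0 := by omega
      simp [this]
  rw [this, ← Finset.sum_mul, ← hN, Nat.mul_factorial_pred hNpos.ne',
    Nat.multinomial_spec Finset.univ k]

theorem stmt3 (n : ℕ) (L : Fin n → ℝ) (hL : ∀ i, 0 < L i) (x : ℝ) :
    Qt L x = (∑ i, Qt L (x - L i)) + (if 0 ≤ x then (1 : ℝ) else 0) := by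
  classical
  set f : ℝ → (Fin n → ℕ) → ℝ :=
    fun y k => if ∑ i, L i * k i ≤ y then (Nat.multinomial Finset.univ k : ℝ) else 0 with hf
  have hQt : ∀ y, Qt L y = ∑' k, f y k := fun y => rfl
  set T : Finset (Fin n → ℕ) := Fintype.piFinset fun i => Finset.range (⌈x / L i⌉₊ + 1) with hT
  -- every tuple satisfying the constraint (for any y ≤ x) lies in T
  have hmem : ∀ k : Fin n → ℕ, ∑ j, L j * k j ≤ x → k ∈ T := by
    intro k hk
    rw [hT, Fintype.mem_piFinset]
    intro i
    rw [Finset.mem_range, Nat.lt_succ_iff]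
    have h3 : L i * k i ≤ ∑ j, L j * k j :=
      Finset.single_le_sum (fun j _ => mul_nonneg (hL j).le (Nat.cast_nonneg _)) (mem_univ i)
    have : (k i : ℝ) ≤ x / L i := by
      rw [le_div_iff₀ (hL i)]
      nlinarith
    exact_mod_cast this.trans (Nat.le_ceil _)
  have hvanish : ∀ y ≤ x, ∀ k ∉ T, f y k = 0 := by
    intro y hy k hk
    rw [hf]
    simp only
    rw [if_neg]
    intro hc
    exact hk (hmem k (hc.trans hy))
  have hsummable : ∀ y ≤ x, Summable (f y) :=
    fun y hy => summable_of_ne_finset_zero (hvanish y hy)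
  -- the sum identity for the update
  have hsum_decr : ∀ (k : Fin n → ℕ) (i : Fin n), 0 < k i →
      ∑ j, L j * (Function.update k i (k i - 1) j : ℕ) = (∑ j, L j * k j) - L i := by
    intro k i hki
    rw [← Finset.add_sum_erase _ (fun j => L j * (Function.update k i (k i - 1) j : ℕ)) (mem_univ i),
      ← Finset.add_sum_erase _ (fun j => L j * (k j : ℕ)) (mem_univ i)]
    have h1 : ∑ j ∈ univ.erase i, L j * (Function.update k i (k i - 1) j : ℕ)
        = ∑ j ∈ univ.erase i, L j * (k j : ℕ) := by
      apply Finset.sum_congr rfl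
      intro j hj
      rw [Function.update_of_ne (Finset.ne_of_mem_erase hj)]
    rw [h1, Function.update_self]
    have : ((k i - 1 : ℕ) : ℝ) = (k i : ℝ) - 1 := by
      have : 1 ≤ k i := hki
      push_cast [this]
      ring
    rw [this]
    ring
  -- the per-i shifted functions
  set h : Fin n → (Fin n → ℕ) → ℝ := fun i k =>
    if 0 < k i then f (x - L i) (Function.update k i (k i - 1)) else 0 with hh
  have hsummable_h : ∀ i, Summable (h i) := by
    intro i
    apply summable_of_ne_finset_zero (s := T)
    intro k hk
    rw [hh]
    simp only
    by_cases hki : 0 < k i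
    · rw [if_pos hki, hf]
      simp only
      rw [if_neg]
      intro hc
      rw [hsum_decr k i hki] at hc
      exact hk (hmem k (by linarith))
    · rw [if_neg hki]
  -- pointwise Pascal identity with the cutoff
  have hpoint : ∀ k : Fin n → ℕ, (if k = 0 then 0 else f x k) = ∑ i, h i k := by
    intro k
    by_cases hk0 : k = 0
    · subst hk0
      simp [hh]
    · rw [if_neg hk0]
      have hcond : ∀ i, 0 < k i →
          ((∑ j, L j * (Function.update k i (k i - 1) j : ℕ) ≤ x - L i) ↔
            ∑ j, L j * k j ≤ x) := by
        intro i hki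
        rw [hsum_decr k i hki]
        constructor <;> intro <;> linarith
      by_cases hc : ∑ j, L j * k j ≤ x
      · rw [hf]
        simp only [if_pos hc]
        rw [pascal_multinomial k hk0, Nat.cast_sum]
        apply Finset.sum_congr rfl
        intro i _
        rw [hh]
        simp only
        by_cases hki : 0 < k i
        · rw [if_pos hki, if_pos hki, hf]
          simp only
          rw [if_pos ((hcond i hki).mpr hc)]
        · rw [if_neg hki, if_neg hki]
          simp
      · rw [hf]
        simp only [if_neg hc]
        symm
        apply Finset.sum_eq_zero
        intro i _
        rw [hh]
        simp only
        by_cases hki : 0 < k i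
        · rw [if_pos hki, hf]
          simp only
          rw [if_neg fun hcc => hc ((hcond i hki).mp hcc)]
        · rw [if_neg hki]
  -- the value at 0
  have h0 : f x 0 = if 0 ≤ x then 1 else 0 := by
    rw [hf]
    simp [Nat.multinomial]
  -- the tail equals the shifted sums
  have htail : ∑' k, (if k = (0 : Fin n → ℕ) then 0 else f x k) = ∑ i, Qt L (x - L i) := by
    calc ∑' k, (if k = (0 : Fin n → ℕ) then 0 else f x k)
        = ∑' k, ∑ i, h i k := tsum_congr hpoint
      _ = ∑ i, ∑' k, h i k := Summable.tsum_finsetSum (fun i _ => hsummable_h i)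
      _ = ∑ i, Qt L (x - L i) := by
          apply Finset.sum_congr rfl
          intro i _
          rw [hQt]
          have hg : Function.Injective
              (fun k : Fin n → ℕ => Function.update k i (k i + 1)) := by
            intro a b hab
            funext j
            have := congrFun hab j
            by_cases hj : j = i
            · subst hj
              simpa using this
            · simpa [Function.update_of_ne hj] using this
          have hrange : Function.support (h i) ⊆
              Set.range (fun k : Fin n → ℕ => Function.update k i (k i + 1)) := by
            intro k hk
            rw [Function.mem_support] at hk
            have hki : 0 < k i := by
              by_contra hki
              rw [hh] at hk
              simp only at hk
              exact hk (if_neg hki)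
            refine ⟨Function.update k i (k i - 1), ?_⟩
            simp only [Function.update_self, Function.update_idem]
            rw [show k i - 1 + 1 = k i by omega, Function.update_eq_self]
          rw [← hg.tsum_eq hrange]
          apply tsum_congr
          intro k
          rw [hh]
          simp only [Function.update_self, Function.update_idem,
            Nat.add_sub_cancel, Function.update_eq_self]
          rw [if_pos (Nat.succ_pos _)]
  rw [hQt x, Summable.tsum_eq_add_tsum_ite (hsummable x le_rfl) 0, h0, htail, add_comm]
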